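/- Let E be a finite-dimensional real normed vector space, U ⊆ E open, J an almost complex structure on U, and Γ the Christoffel symbols of an almost complex linear connection on U (∇J = 0) with torsion T. Define A : U → (E →L[ℝ] E →L[ℝ] E) by A(x)(u)(v) := -(1/2)·T^{++}(x)(u,v) - T^{-+}(x)(u,v), components taken with respect to J(x). Then Γ̃ := Γ + A is again an almost complex connection for J, and its torsion satisfies T̃(x)(u,v) = (1/4)·N_J(u,v)(x) for all x, u, v; in other words, minimal almost complex connections exist. -/

import Mathlib

/-- The Lie bracket of two vector fields on a normed space. -/
noncomputable def lieB {G : Type*} [NormedAddCommGroup G] [NormedSpace ℝ G]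
    (X Y : G → G) : G → G :=
  fun p => fderiv ℝ Y p (X p) - fderiv ℝ X p (Y p)

/-- The Nijenhuis tensor `N_J(X,Y) = [JX,JY] - J[JX,Y] - J[X,JY] - [X,Y]`. -/
noncomputable def nijenhuis {G : Type*} [NormedAddCommGroup G] [NormedSpace ℝ G]
    (J : G → G →L[ℝ] G) (X Y : G → G) : G → G :=
  fun p =>
    lieB (fun q => J q (X q)) (fun q => J q (Y q)) p
      - J p (lieB (fun q => J q (X q)) Y p)
      - J p (lieB X (fun q => J q (Y q)) p)
      - lieB X Y p

/-- The `(ε₁,ε₂)`-component of a bilinear map with respect to a linear complex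
structure `j`. -/
noncomputable def signComp {E : Type*} [NormedAddCommGroup E] [NormedSpace ℝ E]
    (j : E →L[ℝ] E) (S : E → E → E) (ε₁ ε₂ : ℝ) : E → E → E :=
  fun u v =>
    (1/4 : ℝ) • (S u v - ε₁ • j (S (j u) v) - ε₂ • j (S u (j v)) - (ε₁ * ε₂) • S (j u) (j v))

/-- The torsion `T(x)(u,v) = Γ(x)(u)(v) - Γ(x)(v)(u)` of a connection. -/
noncomputable def torsionOf {E : Type*} [NormedAddCommGroup E] [NormedSpace ℝ E]
    (Γ : E → E →L[ℝ] E →L[ℝ] E) : E → E → E → E :=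
  fun x u v => Γ x u v - Γ x v u

/-- The gauge `A = -(1/2)T^{++} - T^{-+}` of Theorem A.1 of the paper. -/
noncomputable def gaugeA {E : Type*} [NormedAddCommGroup E] [NormedSpace ℝ E]
    (J : E → E →L[ℝ] E) (Γ : E → E →L[ℝ] E →L[ℝ] E) : E → E → E → E :=
  fun x u v =>
    -((1/2 : ℝ) • signComp (J x) (torsionOf Γ x) 1 1 u v)
      - signComp (J x) (torsionOf Γ x) (-1) 1 u v

/-- The gauged connection `Γ̃ = Γ + A`. -/
noncomputable def newConn {E : Type*} [NormedAddCommGroup E] [NormedSpace ℝ E]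
    (J : E → E →L[ℝ] E) (Γ : E → E →L[ℝ] E →L[ℝ] E) : E → E → E → E :=
  fun x u v => Γ x u v + gaugeA J Γ x u v

/-- Second part of Theorem A.1 of the paper: gauging an almost complex connection `Γ`
by `A = -(1/2)T^{++} - T^{-+}` yields again an almost complex connection, whose
torsion is `(1/4)·N_J`; i.e. minimal almost complex connections exist. -/
theorem minimal_connection_exists
    {E : Type*} [NormedAddCommGroup E] [NormedSpace ℝ E] [FiniteDimensional ℝ E]
    (U : Set E) (hU : IsOpen U)
    (J : E → E →L[ℝ] E)
    (hJs : ContDiffOn ℝ (⊤ : ℕ∞) J U)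
    (hJ2 : ∀ x ∈ U, (J x).comp (J x) = -ContinuousLinearMap.id ℝ E)
    (Γ : E → E →L[ℝ] E →L[ℝ] E)
    (hΓs : ContDiffOn ℝ (⊤ : ℕ∞) Γ U)
    (hac : ∀ x ∈ U, ∀ u v : E,
      fderiv ℝ J x u v + Γ x u (J x v) - J x (Γ x u v) = 0) :
    (∀ x ∈ U, ∀ u v : E,
      fderiv ℝ J x u v + newConn J Γ x u (J x v) - J x (newConn J Γ x u v) = 0) ∧
    (∀ x ∈ U, ∀ u v : E,
      newConn J Γ x u v - newConn J Γ x v u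
        = (1/4 : ℝ) • nijenhuis J (fun _ => u) (fun _ => v) x) := by
  constructor
  · -- the gauged connection is still almost complex
    intro x hx u v
    have hjj : ∀ w : E, J x (J x w) = -w := by
      intro w
      have h := congrArg (fun L : E →L[ℝ] E => L w) (hJ2 x hx)
      simpa using h
    have hD : ∀ a b : E, fderiv ℝ J x a b = J x (Γ x a b) - Γ x a (J x b) := by
      intro a b
      have h := hac x hx a b
      have h2 := sub_eq_zero.mp h
      exact eq_sub_of_add_eq h2
    simp only [newConn, gaugeA, signComp, torsionOf, hD, hjj, one_mul, one_smul,
      neg_one_smul, neg_mul, map_sub, map_add, map_neg, map_smul, smul_sub, smul_neg,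
      sub_neg_eq_add, neg_neg, ContinuousLinearMap.neg_apply, ContinuousLinearMap.add_apply,
      ContinuousLinearMap.sub_apply, ContinuousLinearMap.smul_apply]
    module
  · -- torsion of the gauged connection is (1/4) N_J
    intro x hx u v
    have hjj : ∀ w : E, J x (J x w) = -w := by
      intro w
      have h := congrArg (fun L : E →L[ℝ] E => L w) (hJ2 x hx)
      simpa using h
    have hD : ∀ a b : E, fderiv ℝ J x a b = J x (Γ x a b) - Γ x a (J x b) := by
      intro a b
      have h := hac x hx a b
      have h2 := sub_eq_zero.mp h
      exact eq_sub_of_add_eq h2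
    have hJd : DifferentiableAt ℝ J x :=
      (hJs.contDiffAt (hU.mem_nhds hx)).differentiableAt (by simp)
    have hda : ∀ a : E, fderiv ℝ (fun q => J q a) x = (fderiv ℝ J x).flip a := by
      intro a
      rw [fderiv_clm_apply hJd (differentiableAt_const a)]
      simp
    have hN : nijenhuis J (fun _ => u) (fun _ => v) x =
        fderiv ℝ J x (J x u) v - fderiv ℝ J x (J x v) u
          + J x (fderiv ℝ J x v u) - J x (fderiv ℝ J x u v) := by
      simp only [nijenhuis, lieB, hda u, hda v, fderiv_fun_const, Pi.zero_apply,
        ContinuousLinearMap.zero_apply, ContinuousLinearMap.flip_apply,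
        map_sub, map_neg, zero_sub, sub_zero, map_zero]
      abel
    rw [hN]
    simp only [newConn, gaugeA, signComp, torsionOf, hD, hjj, one_mul, one_smul,
      neg_one_smul, neg_mul, map_sub, map_add, map_neg, map_smul, smul_sub, smul_neg,
      sub_neg_eq_add, neg_neg, ContinuousLinearMap.neg_apply, ContinuousLinearMap.add_apply,
      ContinuousLinearMap.sub_apply, ContinuousLinearMap.smul_apply]
    module
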